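/- If the VC-dimension bound for wedges holds (no 6 wedges shattered by points) and the wedge-restriction property holds for each of k ≥ 6 interior points with respect to a common pair of hull vertices, then at most 5 points of a shattered set S in a simple polygon can lie strictly inside the convex hull of S. -/

import Mathlib

open Bornology in
/-- A simple polygon: the closed region bounded by a simple closed polygonal curve,
given by its cyclically ordered vertices. `carrier` consists of the polygonal curve
together with all bounded connected components of its complement. -/
structure SimplePolygon where
  n : ℕ
  three_le : 3 ≤ n
  vtx : Fin n → ℝ × ℝ
  inj : Function.Injective vtx
  adj : ∀ i : Fin n,
    segment ℝ (vtx i) (vtx (finRotate n i)) ∩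
      segment ℝ (vtx (finRotate n i)) (vtx (finRotate n (finRotate n i)))
    = {vtx (finRotate n i)}
  nonadj : ∀ i j : Fin n, j ≠ i → j ≠ finRotate n i → i ≠ finRotate n j →
    segment ℝ (vtx i) (vtx (finRotate n i)) ∩ segment ℝ (vtx j) (vtx (finRotate n j)) = ∅
  carrier : Set (ℝ × ℝ)
  carrier_def : carrier =
    {x : ℝ × ℝ |
      IsBounded (connectedComponentIn (⋃ i : Fin n, segment ℝ (vtx i) (vtx (finRotate n i)))ᶜ x)}

/-- The visibility region of a point `v` in a simple polygon `P`. -/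
def vis (P : SimplePolygon) (v : ℝ × ℝ) : Set (ℝ × ℝ) :=
  {x ∈ P.carrier | segment ℝ x v ⊆ P.carrier}

/-- The planar cross product. -/
def cross (p q : ℝ × ℝ) : ℝ := p.1 * q.2 - p.2 * q.1

/-- A wedge: the intersection of two closed half-planes whose boundary lines meet
in a single point (the apex). Equivalently, the convex cone with apex `apex`
spanned by the two linearly independent directions `dir₁`, `dir₂`. -/
structure Wedge where
  apex : ℝ × ℝ
  dir₁ : ℝ × ℝ
  dir₂ : ℝ × ℝ
  indep : dir₁.1 * dir₂.2 - dir₁.2 * dir₂.1 ≠ 0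

/-- The region covered by a wedge. -/
def Wedge.carrier (w : Wedge) : Set (ℝ × ℝ) :=
  {x | ∃ s t : ℝ, 0 ≤ s ∧ 0 ≤ t ∧ x = w.apex + s • w.dir₁ + t • w.dir₂}

/-- The two boundary half-lines (rays) of a wedge, emanating from the apex. -/
def Wedge.ray (w : Wedge) (b : Bool) : Set (ℝ × ℝ) :=
  {x | ∃ s : ℝ, 0 ≤ s ∧ x = w.apex + s • (if b then w.dir₁ else w.dir₂)}

/-- The boundary of a wedge: the union of its two rays. -/
def Wedge.bdry (w : Wedge) : Set (ℝ × ℝ) := w.ray true ∪ w.ray false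

/-- If no 6 wedges can be shattered by points, and for every interior point `a` of a
shattered set `S` the visibility region of `a`, restricted to the view points seeing all
hull vertices of `S`, coincides with a wedge, then at most 5 points of `S` lie strictly
inside the convex hull of `S`. -/
theorem stmt13 (P : SimplePolygon) (S : Finset (ℝ × ℝ)) (hSP : (S : Set (ℝ × ℝ)) ⊆ P.carrier)
    (hshatter : ∀ T ⊆ S, ∃ v ∈ P.carrier, vis P v ∩ (S : Set (ℝ × ℝ)) = (T : Set (ℝ × ℝ)))
    (A : Finset (ℝ × ℝ))
    (hA : ∀ p, p ∈ A ↔ p ∈ S ∧ p ∈ interior (convexHull ℝ (S : Set (ℝ × ℝ))))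
    (hwedge : ∀ a ∈ A, ∃ w : Wedge,
      {u ∈ P.carrier | ∀ b ∈ S \ A, segment ℝ u b ⊆ P.carrier} ∩ vis P a =
      {u ∈ P.carrier | ∀ b ∈ S \ A, segment ℝ u b ⊆ P.carrier} ∩ w.carrier)
    (hVC : ∀ w : Fin 6 → Wedge,
      ∃ T : Set (Fin 6), ¬ ∃ x : ℝ × ℝ, {i : Fin 6 | x ∈ (w i).carrier} = T) :
    A.card ≤ 5 := by
  classical
  by_contra hcard
  push_neg at hcard
  have hAS : A ⊆ S := fun p hp => ((hA p).1 hp).1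
  obtain ⟨B, hBA, hB6⟩ := Finset.exists_subset_card_eq (s := A) (n := 6) (by omega)
  let e := B.equivFinOfCardEq hB6
  set a : Fin 6 → ℝ × ℝ := fun i => (e.symm i : ℝ × ℝ) with ha
  have hainj : Function.Injective a := fun i j h => by
    have := Subtype.coe_injective h
    exact e.symm.injective this
  have haA : ∀ i, a i ∈ A := fun i => hBA (e.symm i).2
  choose w hw using fun i => hwedge (a i) (haA i)
  obtain ⟨T, hT⟩ := hVC w
  apply hT
  set T' : Finset (ℝ × ℝ) := (S \ A) ∪ T.toFinset.image a with hT'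
  have hT'S : T' ⊆ S := by
    intro x hx
    rcases Finset.mem_union.1 hx with h | h
    · exact (Finset.mem_sdiff.1 h).1
    · obtain ⟨i, _, rfl⟩ := Finset.mem_image.1 h
      exact hAS (haA i)
  obtain ⟨v, hvP, hvis⟩ := hshatter T' hT'S
  have hvG : v ∈ {u ∈ P.carrier | ∀ b ∈ S \ A, segment ℝ u b ⊆ P.carrier} := by
    refine ⟨hvP, fun b hb => ?_⟩
    have hbT' : b ∈ T' := Finset.mem_union_left _ hb
    have : b ∈ vis P v ∩ (S : Set (ℝ × ℝ)) := by
      rw [hvis]; exact_mod_cast hbT'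
    rw [segment_symm]
    exact this.1.2
  refine ⟨v, ?_⟩
  ext i
  simp only [Set.mem_setOf_eq]
  have haiS : a i ∈ (S : Set (ℝ × ℝ)) := hAS (haA i)
  have key : v ∈ (w i).carrier ↔ v ∈ vis P (a i) := by
    constructor
    · intro h
      have : v ∈ {u ∈ P.carrier | ∀ b ∈ S \ A, segment ℝ u b ⊆ P.carrier} ∩ (w i).carrier :=
        ⟨hvG, h⟩
      rw [← hw i] at this
      exact this.2
    · intro h
      have : v ∈ {u ∈ P.carrier | ∀ b ∈ S \ A, segment ℝ u b ⊆ P.carrier} ∩ vis P (a i) :=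
        ⟨hvG, h⟩
      rw [hw i] at this
      exact this.2
  rw [key]
  have key2 : v ∈ vis P (a i) ↔ a i ∈ T' := by
    constructor
    · intro h
      have : a i ∈ vis P v ∩ (S : Set (ℝ × ℝ)) := ⟨⟨hSP haiS, by rw [segment_symm]; exact h.2⟩, haiS⟩
      rw [hvis] at this
      exact_mod_cast this
    · intro h
      have : a i ∈ vis P v ∩ (S : Set (ℝ × ℝ)) := by
        rw [hvis]; exact_mod_cast h
      exact ⟨hvP, by rw [segment_symm]; exact this.1.2⟩
  rw [key2]
  constructor
  · intro h
    rcases Finset.mem_union.1 h with h | h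
    · exact absurd (haA i) (Finset.mem_sdiff.1 h).2
    · obtain ⟨j, hj, hji⟩ := Finset.mem_image.1 h
      exact (hainj hji) ▸ (Set.mem_toFinset.1 hj)
  · intro h
    exact Finset.mem_union_right _ (Finset.mem_image.2 ⟨i, Set.mem_toFinset.2 h, rfl⟩)
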